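/- Totally unimodular tour matrices are closed under pivoting: if T = [[1, c], [b, D]] is a totally unimodular tour matrix with tour representation [f Q | e S] satisfying [f Q]T = [e S], then B = [[-1, c], [b, D - bc]] is a tour matrix, with tour representation [e Q | -f S]. -/

import Mathlib

/-- A real matrix is totally unimodular if every square submatrix has determinant 0, +1 or -1. -/
def IsTU {m n : Type*} (A : Matrix m n ℝ) : Prop :=
  ∀ (k : ℕ) (f : Fin k → m) (g : Fin k → n), Function.Injective f → Function.Injective g →
    (A.submatrix f g).det ∈ ({0, 1, -1} : Set ℝ)

/-- A matrix is (column-wise) the incidence matrix of a bidirected graph: every entry lies in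
`{0, ±1, ±2}` and the absolute values of the entries of each column sum to at most `2`. -/
def IsBidirIncid {V E : Type*} [Fintype V] (M : Matrix V E ℝ) : Prop :=
  (∀ v e, M v e ∈ ({0, 1, -1, 2, -2} : Set ℝ)) ∧ ∀ e, (∑ v, |M v e|) ≤ 2

/-- A `{0, ±1}` matrix `B` is a tour matrix if there is a bidirected graph with incidence
matrix `[Q | S]` such that `Q * B = S` and `Q` has full row rank. -/
def IsTourMatrix {m n : Type*} [Fintype m] [Fintype n] (B : Matrix m n ℝ) : Prop :=
  (∀ i j, B i j ∈ ({0, 1, -1} : Set ℝ)) ∧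
  ∃ (V : Type) (_ : Fintype V) (_ : DecidableEq V) (Q : Matrix V m ℝ) (S : Matrix V n ℝ),
    IsBidirIncid Q ∧ IsBidirIncid S ∧ Q * B = S ∧ Q.rank = Fintype.card V

/-- Rectangular version of `Matrix.rank_reindex`. -/
lemma rank_reindex_rect {k l m' n' : Type*} [Fintype l] [Fintype n']
    (e₁ : k ≃ m') (e₂ : l ≃ n') (A : Matrix k l ℝ) :
    (Matrix.reindex e₁ e₂ A).rank = A.rank := by
  rw [Matrix.rank, Matrix.rank, Matrix.mulVecLin_reindex, LinearMap.range_comp,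
    LinearMap.range_comp, LinearEquiv.range, Submodule.map_top, LinearEquiv.finrank_map_eq]

set_option maxHeartbeats 1000000 in
/-- Totally unimodular tour matrices are closed under pivoting: if
`T = [[1, c], [b, D]]` is a TU tour matrix with tour representation `[f Q | e S]`
(so `[f Q] * T = [e S]`, `[f Q]` full row rank, and `[f Q e S]` is a bidirected
incidence matrix), then the pivoted matrix `B = [[-1, c], [b, D - bc]]` is a tour matrix,
with tour representation `[e Q | -f S]`. -/
theorem TU_tourMatrix_closed_under_pivot {V m n : Type*} [Fintype V] [Fintype m] [Fintype n]
    (f e : V → ℝ) (Q : Matrix V m ℝ) (S : Matrix V n ℝ)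
    (b : m → ℝ) (c : n → ℝ) (D : Matrix m n ℝ)
    (hIncid : IsBidirIncid (Matrix.of fun v =>
      Sum.elim (Sum.elim (fun _ : Unit => f v) (Q v))
               (Sum.elim (fun _ : Unit => e v) (S v))))
    (hrank : (Matrix.of fun v => Sum.elim (fun _ : Unit => f v) (Q v) :
      Matrix V (Unit ⊕ m) ℝ).rank = Fintype.card V)
    (hTU : IsTU (Matrix.fromBlocks (Matrix.of fun (_ : Unit) (_ : Unit) => (1 : ℝ))
      (Matrix.replicateRow Unit c) (Matrix.replicateCol Unit b) D))
    (heq : (Matrix.of fun v => Sum.elim (fun _ : Unit => f v) (Q v)) *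
        (Matrix.fromBlocks (Matrix.of fun (_ : Unit) (_ : Unit) => (1 : ℝ))
          (Matrix.replicateRow Unit c) (Matrix.replicateCol Unit b) D) =
      (Matrix.of fun v => Sum.elim (fun _ : Unit => e v) (S v))) :
    IsTourMatrix (Matrix.fromBlocks (Matrix.of fun (_ : Unit) (_ : Unit) => (-1 : ℝ))
      (Matrix.replicateRow Unit c) (Matrix.replicateCol Unit b) (D - Matrix.vecMulVec b c)) ∧
    (Matrix.of fun v => Sum.elim (fun _ : Unit => e v) (Q v)) *
        (Matrix.fromBlocks (Matrix.of fun (_ : Unit) (_ : Unit) => (-1 : ℝ))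
          (Matrix.replicateRow Unit c) (Matrix.replicateCol Unit b) (D - Matrix.vecMulVec b c)) =
      (Matrix.of fun v => Sum.elim (fun _ : Unit => -f v) (S v)) ∧
    (Matrix.of fun v => Sum.elim (fun _ : Unit => e v) (Q v) :
      Matrix V (Unit ⊕ m) ℝ).rank = Fintype.card V := by
  classical
  set B : Matrix (Unit ⊕ m) (Unit ⊕ n) ℝ :=
    Matrix.fromBlocks (Matrix.of fun (_ : Unit) (_ : Unit) => (-1 : ℝ))
      (Matrix.replicateRow Unit c) (Matrix.replicateCol Unit b) (D - Matrix.vecMulVec b c) with hB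
  set Q' : Matrix V (Unit ⊕ m) ℝ :=
    Matrix.of fun v => Sum.elim (fun _ : Unit => e v) (Q v) with hQ'
  set S' : Matrix V (Unit ⊕ n) ℝ :=
    Matrix.of fun v => Sum.elim (fun _ : Unit => -f v) (S v) with hS'def
  -- componentwise consequences of heq
  have he : ∀ v, e v = f v + ∑ j, Q v j * b j := by
    intro v
    have := congrFun (congrFun heq v) (Sum.inl ())
    simp [Matrix.mul_apply, Fintype.sum_sum_type, Matrix.fromBlocks] at this
    linarith
  have hS : ∀ v k, S v k = f v * c k + ∑ j, Q v j * D j k := by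
    intro v k
    have := congrFun (congrFun heq v) (Sum.inr k)
    simp [Matrix.mul_apply, Fintype.sum_sum_type, Matrix.fromBlocks] at this
    linarith
  -- the product identity for the pivoted matrix
  have hprod : Q' * B = S' := by
    ext v x
    cases x with
    | inl u =>
      simp only [hB, hQ', hS'def, Matrix.mul_apply, Fintype.sum_sum_type, Matrix.fromBlocks,
        Matrix.of_apply, Sum.elim_inl, Sum.elim_inr, Matrix.replicateCol_apply,
        Finset.univ_unique, Finset.sum_singleton]
      rw [he v]; ring
    | inr k =>
      have hsum : ∑ j, Q v j * (D j k - b j * c k)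
          = (∑ j, Q v j * D j k) - (∑ j, Q v j * b j) * c k := by
        rw [Finset.sum_mul, ← Finset.sum_sub_distrib]
        exact Finset.sum_congr rfl fun j _ => by ring
      simp only [hB, hQ', hS'def, Matrix.mul_apply, Fintype.sum_sum_type, Matrix.fromBlocks,
        Matrix.of_apply, Sum.elim_inl, Sum.elim_inr, Matrix.replicateRow_apply,
        Matrix.sub_apply, Matrix.vecMulVec_apply,
        Finset.univ_unique, Finset.sum_singleton]
      rw [hsum, he v, hS v k]; ring
  -- rank
  have hP : Q' =
      (Matrix.of fun v => Sum.elim (fun _ : Unit => f v) (Q v)) *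
        (Matrix.fromBlocks (1 : Matrix Unit Unit ℝ) 0 (Matrix.replicateCol Unit b) 1) := by
    ext v x
    cases x with
    | inl u =>
      simp only [hQ', Matrix.mul_apply, Fintype.sum_sum_type, Matrix.fromBlocks,
        Matrix.of_apply, Sum.elim_inl, Sum.elim_inr, Matrix.replicateCol_apply,
        Matrix.one_apply, if_true, Finset.univ_unique, Finset.sum_singleton]
      rw [he v]; simp
    | inr j =>
      simp [hQ', Matrix.mul_apply, Fintype.sum_sum_type, Matrix.fromBlocks,
        Matrix.one_apply, Finset.sum_ite_eq']
  have hrank' : Q'.rank = Fintype.card V := by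
    rw [hP, Matrix.rank_mul_eq_left_of_isUnit_det _ _ (by
      rw [Matrix.det_fromBlocks_zero₁₂]; simp), hrank]
  -- entries of the pivoted matrix
  have hT01 : ∀ (i : Unit ⊕ m) (j : Unit ⊕ n),
      (Matrix.fromBlocks (Matrix.of fun (_ : Unit) (_ : Unit) => (1 : ℝ))
        (Matrix.replicateRow Unit c) (Matrix.replicateCol Unit b) D) i j ∈ ({0, 1, -1} : Set ℝ) := by
    intro i j
    have := hTU 1 (fun _ => i) (fun _ => j)
      (Function.injective_of_subsingleton _) (Function.injective_of_subsingleton _)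
    simpa [Matrix.det_fin_one] using this
  have hB01 : ∀ (i : Unit ⊕ m) (j : Unit ⊕ n), B i j ∈ ({0, 1, -1} : Set ℝ) := by
    rintro (u | i) (w | j)
    · simp [hB]
    · simpa [hB] using hT01 (Sum.inl u) (Sum.inr j)
    · simpa [hB] using hT01 (Sum.inr i) (Sum.inl w)
    · have hinj1 : Function.Injective ![Sum.inl (), Sum.inr i] := by
        intro a b' hab; fin_cases a <;> fin_cases b' <;> simp_all
      have hinj2 : Function.Injective ![Sum.inl (), Sum.inr j] := by
        intro a b' hab; fin_cases a <;> fin_cases b' <;> simp_all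
      have h2 := hTU 2 ![Sum.inl (), Sum.inr i] ![Sum.inl (), Sum.inr j] hinj1 hinj2
      have hval : ((Matrix.fromBlocks (Matrix.of fun (_ : Unit) (_ : Unit) => (1 : ℝ))
          (Matrix.replicateRow Unit c) (Matrix.replicateCol Unit b) D).submatrix
            ![Sum.inl (), Sum.inr i] ![Sum.inl (), Sum.inr j]).det
          = D i j - b i * c j := by
        rw [Matrix.det_fin_two]
        simp only [Matrix.submatrix_apply, Matrix.cons_val_zero, Matrix.cons_val_one,
          Matrix.head_cons, Matrix.fromBlocks_apply₁₁, Matrix.fromBlocks_apply₁₂,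
          Matrix.fromBlocks_apply₂₁, Matrix.fromBlocks_apply₂₂, Matrix.of_apply,
          Matrix.replicateRow_apply, Matrix.replicateCol_apply]
        ring
      rw [hval] at h2
      simpa only [hB, Matrix.fromBlocks_apply₂₂, Matrix.sub_apply,
        Matrix.vecMulVec_apply] using h2
  -- bidirected incidence properties
  obtain ⟨hent, hcol⟩ := hIncid
  have hQ'i : IsBidirIncid Q' := by
    constructor
    · rintro v (u | j)
      · simpa [hQ'] using hent v (Sum.inr (Sum.inl ()))
      · simpa [hQ'] using hent v (Sum.inl (Sum.inr j))
    · rintro (u | j)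
      · simpa [hQ'] using hcol (Sum.inr (Sum.inl ()))
      · simpa [hQ'] using hcol (Sum.inl (Sum.inr j))
  have hS'i : IsBidirIncid S' := by
    constructor
    · rintro v (u | k)
      · have := hent v (Sum.inl (Sum.inl ()))
        simp only [hS'def, Set.mem_insert_iff, Set.mem_singleton_iff, Matrix.of_apply,
          Sum.elim_inl, Sum.elim_inr] at this ⊢
        rcases this with h | h | h | h | h <;> rw [h] <;> norm_num
      · simpa [hS'def] using hent v (Sum.inr (Sum.inr k))
    · rintro (u | k)
      · have := hcol (Sum.inl (Sum.inl ()))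
        simpa [hS'def, abs_neg] using this
      · simpa [hS'def] using hcol (Sum.inr (Sum.inr k))
  -- transport to a `Type 0` vertex type
  refine ⟨⟨hB01, ?_⟩, hprod, hrank'⟩
  set N := Fintype.card V with hN
  set σ : Fin N ≃ V := (Fintype.equivFin V).symm with hσ
  refine ⟨Fin N, inferInstance, inferInstance,
    Q'.submatrix σ id, S'.submatrix σ id, ?_, ?_, ?_, ?_⟩
  · exact ⟨fun i j => hQ'i.1 (σ i) j,
      fun j => by rw [show ∑ i, |Q'.submatrix σ id i j| = ∑ v, |Q' v j| from
        Equiv.sum_comp σ fun v => |Q' v j|]; exact hQ'i.2 j⟩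
  · exact ⟨fun i j => hS'i.1 (σ i) j,
      fun j => by rw [show ∑ i, |S'.submatrix σ id i j| = ∑ v, |S' v j| from
        Equiv.sum_comp σ fun v => |S' v j|]; exact hS'i.2 j⟩
  · have : Q'.submatrix σ id * B = (Q' * B).submatrix σ id := by
      ext i j; simp [Matrix.mul_apply]
    rw [this, hprod]
  · have : Q'.submatrix σ id = Matrix.reindex σ.symm (Equiv.refl (Unit ⊕ m)) Q' := by
      ext i j; simp
    rw [this, rank_reindex_rect, hrank']
    simp [hN]
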